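/- arXiv:math/0408154 — 2 statements merged into one kernel-verified Lean document; each statement's English description precedes it below -/
import Mathlib

section
/- For real A with 0 < A < 1, Y > 0, and integer N ≥ 2, (1/(2πi)) ∫_{1-iY}^{1+iY} A^s/s^N ds → 0 as Y → ∞. -/
open Complex Filter MeasureTheory Set
open scoped FourierTransform Real

open Complex Filter MeasureTheory Set
open scoped FourierTransform Real

lemma aux_int {z : ℂ} (hz : 0 < z.re) (n : ℕ) :
    IntegrableOn (fun x : ℝ => (x : ℂ) ^ n * Complex.exp (-(z * x))) (Ioi 0) := by
  have hb : IntegrableOn (fun x : ℝ => x ^ (n : ℝ) * Real.exp (-z.re * x)) (Ioi 0) := by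
    have := integrableOn_rpow_mul_exp_neg_mul_rpow (p := 1) (s := (n : ℝ)) (b := z.re)
      (neg_one_lt_zero.trans_le (Nat.cast_nonneg n)) one_pos hz
    refine this.congr_fun (fun x hx => by simp) measurableSet_Ioi
  refine Integrable.mono' hb ?_ ?_
  · exact ((continuous_ofReal.pow n).mul
      (Complex.continuous_exp.comp ((continuous_const.mul continuous_ofReal).neg))).aestronglyMeasurable.restrict
  · filter_upwards [self_mem_ae_restrict measurableSet_Ioi] with x hx
    have hx0 : (0:ℝ) ≤ x := le_of_lt hx
    simp only [norm_mul, norm_pow, Complex.norm_real, Complex.norm_exp]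
    rw [Real.norm_of_nonneg hx0, Real.rpow_natCast]
    have : (-(z * x)).re = -z.re * x := by simp
    rw [this]

lemma aux_eq {z : ℂ} (hz : 0 < z.re) : ∀ n : ℕ,
    ∫ x in Ioi (0:ℝ), (x : ℂ) ^ n * Complex.exp (-(z * x)) = ((Nat.factorial n : ℕ) : ℂ) / z ^ (n + 1) := by
  have hz0 : z ≠ 0 := fun h => by simp [h] at hz
  have hexp : ∀ x : ℝ, HasDerivAt (fun x : ℝ => Complex.exp (-(z * x)))
      (Complex.exp (-(z * x)) * -z) x := by
    intro x
    have h1 : HasDerivAt (fun w : ℂ => Complex.exp (-(z * w))) (Complex.exp (-(z * x)) * -z) x := by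
      simpa using (((hasDerivAt_id (x : ℂ)).const_mul z).neg).cexp
    exact h1.comp_ofReal
  have htend : ∀ k : ℕ, Tendsto (fun x : ℝ => (x : ℂ) ^ k * Complex.exp (-(z * x))) atTop (nhds 0) := by
    intro k
    rw [tendsto_zero_iff_norm_tendsto_zero]
    have h0 := tendsto_rpow_mul_exp_neg_mul_atTop_nhds_zero (k : ℝ) z.re hz
    refine Tendsto.congr' ?_ h0
    filter_upwards [eventually_gt_atTop (0:ℝ)] with x hx
    simp only [norm_mul, norm_pow, Complex.norm_real, Complex.norm_exp]
    rw [Real.norm_of_nonneg hx.le, Real.rpow_natCast]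
    congr 1
    simp
  intro n
  induction n with
  | zero =>
    have hF : ∀ x ∈ Ioi (0:ℝ), HasDerivAt (fun x : ℝ => Complex.exp (-(z * x)) * -z⁻¹)
        (Complex.exp (-(z * x))) x := by
      intro x _
      have := (hexp x).mul_const (-z⁻¹)
      refine this.congr_deriv ?_
      have hzz : z * z⁻¹ = 1 := mul_inv_cancel₀ hz0
      linear_combination (Complex.exp (-(z * x))) * hzz
    have hco : ContinuousWithinAt (fun x : ℝ => Complex.exp (-(z * x)) * -z⁻¹) (Ici 0) 0 :=
      ((Complex.continuous_exp.comp ((continuous_const.mul continuous_ofReal).neg)).mul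
        continuous_const).continuousWithinAt
    have hlim : Tendsto (fun x : ℝ => Complex.exp (-(z * x)) * -z⁻¹) atTop (nhds 0) := by
      have := (htend 0).mul_const (-z⁻¹)
      simpa using this
    have := integral_Ioi_of_hasDerivAt_of_tendsto hco hF
      ((aux_int hz 0).congr_fun (fun x hx => by simp) measurableSet_Ioi) hlim
    simp only [pow_zero, one_mul] at this ⊢
    rw [this]
    simp [Nat.factorial]
  | succ n ih =>
    have hF : ∀ x ∈ Ioi (0:ℝ), HasDerivAt
        (fun x : ℝ => (x : ℂ) ^ (n + 1) * Complex.exp (-(z * x)) * -z⁻¹)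
        ((x : ℂ) ^ (n + 1) * Complex.exp (-(z * x))
          - ((n + 1 : ℕ) / z) * ((x : ℂ) ^ n * Complex.exp (-(z * x)))) x := by
      intro x _
      have hp : HasDerivAt (fun x : ℝ => (x : ℂ) ^ (n + 1)) ((n + 1 : ℕ) * (x : ℂ) ^ n) x := by
        simpa using (hasDerivAt_pow (n + 1) (x : ℂ)).comp_ofReal
      have := (hp.mul (hexp x)).mul_const (-z⁻¹)
      refine this.congr_deriv ?_
      have hzz : z * z⁻¹ = 1 := mul_inv_cancel₀ hz0
      linear_combination ((x : ℂ) ^ (n + 1) * Complex.exp (-(z * x))) * hzz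
    have hco : ContinuousWithinAt
        (fun x : ℝ => (x : ℂ) ^ (n + 1) * Complex.exp (-(z * x)) * -z⁻¹) (Ici 0) 0 :=
      (((continuous_ofReal.pow (n+1)).mul
        (Complex.continuous_exp.comp ((continuous_const.mul continuous_ofReal).neg))).mul
        continuous_const).continuousWithinAt
    have hlim : Tendsto (fun x : ℝ => (x : ℂ) ^ (n + 1) * Complex.exp (-(z * x)) * -z⁻¹)
        atTop (nhds 0) := by
      have := (htend (n + 1)).mul_const (-z⁻¹)
      simpa using this
    have hint : IntegrableOn (fun x : ℝ => (x : ℂ) ^ (n + 1) * Complex.exp (-(z * x))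
        - ((n + 1 : ℕ) / z) * ((x : ℂ) ^ n * Complex.exp (-(z * x)))) (Ioi 0) :=
      (aux_int hz (n + 1)).sub ((aux_int hz n).const_mul _)
    have key := integral_Ioi_of_hasDerivAt_of_tendsto hco hF hint hlim
    rw [integral_sub (aux_int hz (n + 1)) ((aux_int hz n).const_mul _),
      integral_const_mul, ih] at key
    simp only [Complex.ofReal_zero, mul_zero, neg_zero, Complex.exp_zero,
      zero_pow (Nat.succ_ne_zero n), zero_mul, sub_zero, mul_one] at key
    rw [sub_eq_zero] at key
    rw [key, Nat.factorial_succ]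
    push_cast
    rw [div_mul_div_comm]
    congr 1
    ring


noncomputable def gaux (N : ℕ) : ℝ → ℂ :=
  fun x => ((max x 0 : ℝ) : ℂ) ^ (N - 1) * Complex.exp (-(x : ℂ)) / ((N - 1).factorial : ℂ)

lemma gaux_cont (N : ℕ) : Continuous (gaux N) :=
  (((Complex.continuous_ofReal.comp (continuous_id.max continuous_const)).pow _).mul
    (Complex.continuous_exp.comp continuous_ofReal.neg)).div_const _

lemma aux_abs {N : ℕ} (hN : 2 ≤ N) (c : ℝ) :
    (1 : ℝ) + c ^ 2 ≤ ‖(1 : ℂ) + c * Complex.I‖ ^ N := by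
  have h2 : ‖(1 : ℂ) + c * Complex.I‖ ^ 2 = 1 + c ^ 2 := by
    rw [Complex.sq_norm, Complex.normSq_apply]
    simp
    try ring
  have h1 : 1 ≤ ‖(1 : ℂ) + c * Complex.I‖ := by
    nlinarith [norm_nonneg ((1 : ℂ) + c * Complex.I), sq_nonneg c]
  calc (1 : ℝ) + c ^ 2 = ‖(1 : ℂ) + c * Complex.I‖ ^ 2 := h2.symm
    _ ≤ ‖(1 : ℂ) + c * Complex.I‖ ^ N := pow_le_pow_right₀ h1 hN

lemma gaux_integrable {N : ℕ} (hN : 2 ≤ N) : Integrable (gaux N) := by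
  rw [← integrableOn_univ, ← Iic_union_Ioi (a := (0:ℝ)), integrableOn_union]
  constructor
  · refine (integrableOn_zero (ε' := ℂ)).congr_fun (fun x hx => ?_) measurableSet_Iic
    have : max x 0 = 0 := max_eq_right hx
    simp [gaux, this, zero_pow (by omega : N - 1 ≠ 0)]
  · have h := aux_int (z := 1) (by norm_num) (N - 1)
    have h2 : IntegrableOn
        (fun x : ℝ => (x : ℂ) ^ (N - 1) * Complex.exp (-(1 * x)) / ((N-1).factorial : ℂ))
        (Ioi 0) := h.div_const _
    refine IntegrableOn.congr_fun h2 (fun x hx => ?_) measurableSet_Ioi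
    have : max x 0 = x := max_eq_left (le_of_lt hx)
    simp [gaux, this]

lemma fourier_gaux {N : ℕ} (hN : 2 ≤ N) (w : ℝ) :
    𝓕 (gaux N) w = (((1 : ℂ) + (2 * π * w : ℝ) * Complex.I) ^ N)⁻¹ := by
  set z : ℂ := (1 : ℂ) + (2 * π * w : ℝ) * Complex.I with hzdef
  have hzre : 0 < z.re := by simp [hzdef]
  rw [Real.fourier_real_eq_integral_exp_smul]
  have hsupp : ∀ x : ℝ, x ∉ Ioi (0:ℝ) →
      Complex.exp (↑(-2 * π * x * w) * Complex.I) • gaux N x = 0 := by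
    intro x hx
    have hx0 : x ≤ 0 := le_of_not_gt hx
    have : max x 0 = 0 := max_eq_right hx0
    simp [gaux, this, zero_pow (by omega : N - 1 ≠ 0)]
  rw [← setIntegral_eq_integral_of_forall_compl_eq_zero hsupp]
  have hcongr : ∀ x ∈ Ioi (0:ℝ),
      Complex.exp (↑(-2 * π * x * w) * Complex.I) • gaux N x
        = ((x : ℂ) ^ (N - 1) * Complex.exp (-(z * x))) / ((N - 1).factorial : ℂ) := by
    intro x hx
    have hmx : max x 0 = x := max_eq_left (le_of_lt hx)
    rw [smul_eq_mul]
    simp only [gaux, hmx]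
    rw [mul_div_assoc']
    congr 1
    rw [mul_comm (Complex.exp _), mul_assoc, ← Complex.exp_add]
    congr 1
    rw [hzdef]
    push_cast
    ring_nf
  rw [setIntegral_congr_fun measurableSet_Ioi hcongr]
  rw [integral_div, aux_eq hzre (N - 1)]
  rw [Nat.sub_add_cancel (by omega : 1 ≤ N)]
  rw [div_div, mul_comm (z ^ N), ← div_div,
    div_self (by exact_mod_cast Nat.factorial_ne_zero (N-1) : ((N-1).factorial : ℂ) ≠ 0), one_div]

lemma one_tI_ne (t : ℝ) : ((1 : ℂ) + (t : ℂ) * Complex.I) ≠ 0 := fun h => by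
  simpa using congrArg Complex.re h

lemma fourier_gaux_integrable {N : ℕ} (hN : 2 ≤ N) : Integrable (𝓕 (gaux N)) := by
  have heq : 𝓕 (gaux N) = fun w : ℝ => (((1 : ℂ) + (2 * π * w : ℝ) * Complex.I) ^ N)⁻¹ :=
    funext (fourier_gaux hN)
  rw [heq]
  have hb : Integrable (fun w : ℝ => ((1 : ℝ) + (2 * π * w) ^ 2)⁻¹) :=
    integrable_inv_one_add_sq.comp_mul_left' (ne_of_gt (by positivity : (0:ℝ) < 2 * π))
  refine hb.mono' ?_ ?_
  · refine Continuous.aestronglyMeasurable ?_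
    refine Continuous.inv₀ ?_ (fun w => pow_ne_zero _ (one_tI_ne (2 * π * w)))
    exact (continuous_const.add ((Complex.continuous_ofReal.comp
      (continuous_const.mul continuous_id)).mul continuous_const)).pow N
  · refine Eventually.of_forall (fun w => ?_)
    rw [norm_inv, norm_pow]
    exact inv_anti₀ (by positivity) (aux_abs hN (2 * π * w))

lemma key_cpow (A : ℝ) (hA0 : 0 < A) (t : ℝ) :
    (A : ℂ) ^ ((1 : ℂ) + t * Complex.I)
      = (A : ℂ) * Complex.exp ((Real.log A * t : ℝ) * Complex.I) := by
  rw [Complex.cpow_def_of_ne_zero (by exact_mod_cast hA0.ne' : (A : ℂ) ≠ 0)]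
  rw [← Complex.ofReal_log hA0.le, mul_add, mul_one, Complex.exp_add]
  congr 1
  · rw [← Complex.ofReal_exp, Real.exp_log hA0]
  · congr 1
    push_cast
    ring

lemma f_integrable (A : ℝ) (hA0 : 0 < A) (N : ℕ) (hN : 2 ≤ N) :
    Integrable (fun t : ℝ =>
      (A : ℂ) ^ ((1 : ℂ) + t * Complex.I) / ((1 : ℂ) + t * Complex.I) ^ N * Complex.I) := by
  have hb : Integrable (fun t : ℝ => A * ((1 : ℝ) + t ^ 2)⁻¹) :=
    integrable_inv_one_add_sq.const_mul A
  refine hb.mono' ?_ ?_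
  · have heq : (fun t : ℝ =>
        (A : ℂ) ^ ((1 : ℂ) + t * Complex.I) / ((1 : ℂ) + t * Complex.I) ^ N * Complex.I)
        = fun t : ℝ => (A : ℂ) * Complex.exp ((Real.log A * t : ℝ) * Complex.I)
            / ((1 : ℂ) + t * Complex.I) ^ N * Complex.I :=
      funext fun t => by rw [key_cpow A hA0 t]
    rw [heq]
    refine Continuous.aestronglyMeasurable ?_
    refine ((continuous_const.mul ?_).div ?_ ?_).mul continuous_const
    · exact Complex.continuous_exp.comp ((Complex.continuous_ofReal.comp
        (continuous_const.mul continuous_id)).mul continuous_const)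
    · exact (continuous_const.add (Complex.continuous_ofReal.mul continuous_const)).pow N
    · exact fun t => pow_ne_zero _ (one_tI_ne t)
  · refine Eventually.of_forall (fun t => ?_)
    rw [norm_mul, Complex.norm_I, mul_one, norm_div, norm_pow,
      Complex.norm_cpow_eq_rpow_re_of_pos hA0]
    simp only [Complex.add_re, Complex.one_re, Complex.mul_re, Complex.I_re, Complex.ofReal_re,
      mul_zero, Complex.I_im, Complex.ofReal_im, zero_mul, sub_zero, add_zero, mul_zero,
      Real.rpow_one]
    rw [div_eq_mul_inv]
    exact mul_le_mul_of_nonneg_left (inv_anti₀ (by positivity) (aux_abs hN t)) hA0.le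

lemma full_zero (A : ℝ) (hA0 : 0 < A) (hA1 : A < 1) (N : ℕ) (hN : 2 ≤ N) :
    ∫ t : ℝ, (A : ℂ) ^ ((1 : ℂ) + t * Complex.I) / ((1 : ℂ) + t * Complex.I) ^ N * Complex.I
      = 0 := by
  set a := Real.log A with ha
  have haneg : a < 0 := Real.log_neg hA0 hA1
  have hinv := (gaux_integrable hN).fourierInv_fourier_eq (fourier_gaux_integrable hN)
      ((gaux_cont N).continuousAt (x := a))
  have hga : gaux N a = 0 := by
    simp [gaux, max_eq_right haneg.le, zero_pow (by omega : N - 1 ≠ 0)]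
  rw [hga, Real.fourierInv_eq_fourier_neg,
    Real.fourier_real_eq_integral_exp_smul] at hinv
  have hL : ∫ x : ℝ, (A : ℂ) ^ ((1 : ℂ) + ((2 * π * x : ℝ) : ℂ) * Complex.I)
      / ((1 : ℂ) + ((2 * π * x : ℝ) : ℂ) * Complex.I) ^ N * Complex.I = 0 := by
    have hfun : (fun x : ℝ => (A : ℂ) ^ ((1 : ℂ) + ((2 * π * x : ℝ) : ℂ) * Complex.I)
        / ((1 : ℂ) + ((2 * π * x : ℝ) : ℂ) * Complex.I) ^ N * Complex.I)
        = fun x : ℝ => ((A : ℂ) * Complex.I) •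
            (Complex.exp (((-2 * π * x * -a : ℝ) : ℂ) * Complex.I) • 𝓕 (gaux N) x) := by
      funext x
      rw [fourier_gaux hN x, key_cpow A hA0 (2 * π * x)]
      simp only [smul_eq_mul]
      rw [div_eq_mul_inv]
      rw [show ((-2 * π * x * -a : ℝ) : ℂ) = ((a * (2 * π * x) : ℝ) : ℂ) by push_cast; ring]
      ring
    rw [hfun, integral_smul, hinv, smul_zero]
  have hcv := MeasureTheory.Measure.integral_comp_mul_left
    (fun t : ℝ => (A : ℂ) ^ ((1 : ℂ) + t * Complex.I) / ((1 : ℂ) + t * Complex.I) ^ N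
      * Complex.I) (2 * π)
  have hfin : |(2 * π)⁻¹| • (∫ t : ℝ,
      (A : ℂ) ^ ((1 : ℂ) + t * Complex.I) / ((1 : ℂ) + t * Complex.I) ^ N * Complex.I)
      = 0 := hcv.symm.trans hL
  rcases smul_eq_zero.1 hfin with h | h
  · exact absurd h (by positivity)
  · exact h


theorem perron_integral_lt_one (A : ℝ) (hA0 : 0 < A) (hA1 : A < 1) (N : ℕ) (hN : 2 ≤ N) :
    Tendsto (fun Y : ℝ =>
        (1 / (2 * Real.pi * Complex.I)) *
          ∫ t in (-Y)..Y,
            (A : ℂ) ^ ((1 : ℂ) + t * Complex.I) / ((1 : ℂ) + t * Complex.I) ^ N * Complex.I)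
      atTop (nhds 0) := by
  have ht := intervalIntegral_tendsto_integral (f_integrable A hA0 N hN)
    tendsto_neg_atTop_atBot tendsto_id
  rw [full_zero A hA0 hA1 N hN] at ht
  have := ht.const_mul (1 / (2 * (Real.pi : ℂ) * Complex.I))
  simpa using this
end

section
/- The Keating–Snaith constant g_k/k²! · k²! = k²! · ∏_{j=0}^{k-1} j!/(k+j)! is an integer for every integer k ≥ 1; that is, k²! · ∏_{j=0}^{k-1} j!/(k+j)! ∈ ℤ. -/
open Finset Nat

/-- Hermite-type identity: sum of `(x+j)/m` over `j < m` equals `x`. -/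
lemma hermite_div_sum (m : ℕ) (hm : 0 < m) : ∀ x : ℕ, ∑ j ∈ range m, (x + j) / m = x := by
  intro x
  induction x with
  | zero =>
    refine Finset.sum_eq_zero fun j hj => Nat.div_eq_of_lt ?_
    simpa using Finset.mem_range.mp hj
  | succ x ih =>
    have h1 : ∑ j ∈ range (m + 1), (x + j) / m
        = ∑ j ∈ range m, (x + (j + 1)) / m + (x + 0) / m := Finset.sum_range_succ' _ _
    have h2 : ∑ j ∈ range (m + 1), (x + j) / m
        = ∑ j ∈ range m, (x + j) / m + (x + m) / m := Finset.sum_range_succ _ _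
    have h3 : (x + m) / m = x / m + 1 := Nat.add_div_right x hm
    have h4 : ∑ j ∈ range m, (x + (j + 1)) / m = ∑ j ∈ range m, (x + 1 + j) / m := by
      refine Finset.sum_congr rfl fun j _ => ?_
      congr 1; omega
    simp only [Nat.add_zero] at h1
    omega

/-- Small case of the key inequality: `a, b < m`. -/
lemma key_small (m a b : ℕ) (hm : 0 < m) (ha : a < m) (hb : b < m) :
    ∑ j ∈ range b, (a + j) / m ≤ a * b / m := by
  have step1 : ∑ j ∈ range b, (a + j) / m ≤ ∑ j ∈ range b, (if m ≤ a + j then 1 else 0) := by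
    refine Finset.sum_le_sum fun j hj => ?_
    have hj' : j < b := Finset.mem_range.mp hj
    by_cases h : m ≤ a + j
    · simp only [h, if_true]
      have : (a + j) / m < 2 := (Nat.div_lt_iff_lt_mul hm).mpr (by omega)
      omega
    · simp only [h, if_false]
      exact Nat.le_of_eq (Nat.div_eq_of_lt (by omega))
  have step2 : ∑ j ∈ range b, (if m ≤ a + j then 1 else 0)
      = ((range b).filter (fun j => m ≤ a + j)).card := by
    simp [Finset.sum_boole]
  have step3 : ((range b).filter (fun j => m ≤ a + j)).card = b - (m - a) := by
    have : (range b).filter (fun j => m ≤ a + j) = (Ico 0 b).filter (fun j => m - a ≤ j) := by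
      rw [← Finset.range_eq_Ico]
      refine Finset.filter_congr fun j _ => ?_
      constructor <;> intro h <;> omega
    rw [this, Finset.Ico_filter_le 0 b (m - a), Nat.card_Ico]
    omega
  have step4 : b - (m - a) ≤ a * b / m := by
    rw [Nat.le_div_iff_mul_le hm]
    rcases le_or_gt b (m - a) with h | h
    · simp [Nat.sub_eq_zero_of_le h]
    · zify [show m - a ≤ b by omega, show a ≤ m by omega]
      nlinarith [mul_nonneg (by omega : (0:ℤ) ≤ (m:ℤ) - a) (by omega : (0:ℤ) ≤ (m:ℤ) - b)]
  omega

/-- Middle case: `a < m`, arbitrary `b`. -/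
lemma key_mid (m a : ℕ) (hm : 0 < m) (ha : a < m) :
    ∀ b : ℕ, ∑ j ∈ range b, (a + j) / m ≤ a * b / m + ∑ j ∈ range b, j / m := by
  intro b
  induction b using Nat.strong_induction_on with
  | _ b ih =>
    rcases Nat.lt_or_ge b m with hb | hb
    · exact le_trans (key_small m a b hm ha hb) (Nat.le_add_right _ _)
    · set b' := b - m with hb'
      have hbeq : b = b' + m := by omega
      have e1 : ∑ j ∈ range b, (a + j) / m
          = ∑ j ∈ range b', (a + j) / m + (a + b') := by
        rw [hbeq, Finset.sum_range_add]
        congr 1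
        have : ∑ j ∈ range m, (a + (b' + j)) / m = ∑ j ∈ range m, (a + b' + j) / m := by
          refine Finset.sum_congr rfl fun j _ => ?_; congr 1; omega
        rw [this, hermite_div_sum m hm (a + b')]
      have e2 : ∑ j ∈ range b, j / m = ∑ j ∈ range b', j / m + b' := by
        rw [hbeq, Finset.sum_range_add]
        congr 1
        exact hermite_div_sum m hm b'
      have e3 : a * b / m = a * b' / m + a := by
        rw [hbeq, Nat.mul_add, Nat.add_mul_div_right _ _ hm]
      have := ih b' (by omega)
      omega

/-- Key inequality for Legendre valuations: for every `m > 0`,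
`∑_{j<b} ⌊(a+j)/m⌋ ≤ ⌊ab/m⌋ + ∑_{j<b} ⌊j/m⌋`. -/
lemma key_ineq (m : ℕ) (hm : 0 < m) :
    ∀ a b : ℕ, ∑ j ∈ range b, (a + j) / m ≤ a * b / m + ∑ j ∈ range b, j / m := by
  intro a
  induction a using Nat.strong_induction_on with
  | _ a ih =>
    intro b
    rcases Nat.lt_or_ge a m with ha | ha
    · exact key_mid m a hm ha b
    · set a' := a - m with ha'
      have haeq : a = a' + m := by omega
      have e1 : ∑ j ∈ range b, (a + j) / m = ∑ j ∈ range b, (a' + j) / m + b := by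
        have : ∀ j, (a + j) / m = (a' + j) / m + 1 := by
          intro j
          have : a + j = a' + j + m := by omega
          rw [this, Nat.add_div_right _ hm]
        simp only [this, Finset.sum_add_distrib, Finset.sum_const, card_range, smul_eq_mul,
          mul_one]
      have e2 : a * b / m = a' * b / m + b := by
        have : a * b = a' * b + b * m := by rw [haeq]; ring
        rw [this, Nat.add_mul_div_right _ _ hm]
      have := ih a' (by omega) b
      omega

/-- The main divisibility: `∏_{j<k} (k+j)!` divides `(k²)! ⬝ ∏_{j<k} j!`. -/
lemma keating_snaith_dvd (k : ℕ) (hk : 1 ≤ k) :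
    (∏ j ∈ range k, (k + j).factorial) ∣ ((k ^ 2).factorial * ∏ j ∈ range k, j.factorial) := by
  have hD : (∏ j ∈ range k, (k + j).factorial) ≠ 0 :=
    Finset.prod_ne_zero_iff.mpr fun j _ => Nat.factorial_ne_zero _
  have hP : (∏ j ∈ range k, j.factorial) ≠ 0 :=
    Finset.prod_ne_zero_iff.mpr fun j _ => Nat.factorial_ne_zero _
  have hN : ((k ^ 2).factorial * ∏ j ∈ range k, j.factorial) ≠ 0 :=
    Nat.mul_ne_zero (Nat.factorial_ne_zero _) hP
  rw [← Nat.factorization_le_iff_dvd hD hN]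
  intro p
  by_cases hp : p.Prime
  · haveI : Fact p.Prime := ⟨hp⟩
    set b := k ^ 2 + 1 with hb
    have hsq : ∀ j < k, k + j ≤ k ^ 2 := by
      intro j hj
      have : 1 ≤ k := hk
      nlinarith
    have hlogsq : Nat.log p (k ^ 2) < b := lt_of_le_of_lt (Nat.log_le_self _ _) (by omega)
    have hfact : ∀ n ≤ k ^ 2, (n.factorial).factorization p = ∑ i ∈ Ico 1 b, n / p ^ i := by
      intro n hn
      rw [Nat.factorization_def _ hp]
      exact padicValNat_factorial (lt_of_le_of_lt (le_trans (Nat.log_le_self _ _) hn) (by omega))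
    have hD' : (∏ j ∈ range k, (k + j).factorial).factorization p
        = ∑ j ∈ range k, ∑ i ∈ Ico 1 b, (k + j) / p ^ i := by
      rw [Nat.factorization_prod fun j _ => Nat.factorial_ne_zero _]
      rw [Finset.sum_apply']
      exact Finset.sum_congr rfl fun j hj => hfact _ (hsq j (Finset.mem_range.mp hj))
    have hN' : ((k ^ 2).factorial * ∏ j ∈ range k, j.factorial).factorization p
        = (∑ i ∈ Ico 1 b, k ^ 2 / p ^ i) + ∑ j ∈ range k, ∑ i ∈ Ico 1 b, j / p ^ i := by
      rw [Nat.factorization_mul (Nat.factorial_ne_zero _) hP, Finsupp.add_apply,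
        Nat.factorization_prod fun j _ => Nat.factorial_ne_zero _, Finset.sum_apply']
      congr 1
      · exact hfact _ le_rfl
      · refine Finset.sum_congr rfl fun j hj => hfact _ ?_
        have := hsq j (Finset.mem_range.mp hj); omega
    rw [hD', hN', Finset.sum_comm (s := range k) (t := Ico 1 b),
      Finset.sum_comm (s := range k) (t := Ico 1 b), ← Finset.sum_add_distrib]
    refine Finset.sum_le_sum fun i _ => ?_
    have hpi : 0 < p ^ i := Nat.pow_pos hp.pos
    have := key_ineq (p ^ i) hpi k k
    calc ∑ j ∈ range k, (k + j) / p ^ i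
        ≤ k * k / p ^ i + ∑ j ∈ range k, j / p ^ i := key_ineq (p ^ i) hpi k k
      _ = k ^ 2 / p ^ i + ∑ j ∈ range k, j / p ^ i := by rw [sq]
  · simp [Nat.factorization_eq_zero_of_not_prime _ hp]

theorem keating_snaith_gk_integer (k : ℕ) (hk : 1 ≤ k) :
    ∃ g : ℤ, ((k ^ 2).factorial : ℚ) *
        ∏ j ∈ Finset.range k, ((j.factorial : ℚ) / ((k + j).factorial : ℚ)) = g := by
  obtain ⟨g, hg⟩ := keating_snaith_dvd k hk
  refine ⟨(g : ℤ), ?_⟩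
  have hD : ((∏ j ∈ range k, (k + j).factorial : ℕ) : ℚ) ≠ 0 := by
    exact_mod_cast Finset.prod_ne_zero_iff.mpr fun j _ => Nat.factorial_ne_zero _
  rw [Finset.prod_div_distrib, ← Nat.cast_prod, ← Nat.cast_prod, mul_div_assoc',
    div_eq_iff hD, ← Nat.cast_mul, hg]
  push_cast
  ring
end
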